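/- Let A ⊆ B be rings with B finitely generated as a left A-module, and let 𝔞 ⊆ rad A be a two-sided ideal of A with B𝔞 ⊆ 𝔞B. Then 𝔞 annihilates every simple left B-module. -/

import Mathlib

/-- The right multiples `𝔞B` of a two-sided ideal `𝔞` of a subring `A ⊆ B`,
as an additive subgroup of `B`. -/
def idealRightMultiples {B : Type*} [Ring B] (A : Subring B) (a : Ideal A) : AddSubgroup B :=
  AddSubgroup.closure {z : B | ∃ x ∈ a, ∃ b : B, z = (x : B) * b}

/-- In a possibly noncommutative ring, `1 - x` is a unit for `x` in the Jacobson radical. -/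
lemma aux_isUnit_one_sub {R : Type*} [Ring R] {x : R}
    (hx : x ∈ (⊥ : Ideal R).jacobson) : IsUnit (1 - x) := by
  have key : ∀ y : R, y ∈ (⊥ : Ideal R).jacobson → ∃ s : R, s * (1 - y) = 1 := by
    intro y hy
    obtain ⟨s, hs⟩ := Ideal.exists_mul_sub_mem_of_sub_one_mem_jacobson (1 - y)
      (by simpa using ((⊥ : Ideal R).jacobson.neg_mem hy))
    exact ⟨s, by rwa [Ideal.mem_bot, sub_eq_zero] at hs⟩
  obtain ⟨s, hs⟩ := key x hx
  -- s = 1 - (1 - s), and 1 - s = -(s * x) is in the radical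
  have h1s : (1 : R) - s ∈ (⊥ : Ideal R).jacobson := by
    have hsx : s - s * x = 1 := by rw [← hs, mul_sub, mul_one]
    have : (1 : R) - s = -(s * x) := by rw [← hsx]; abel
    rw [this]
    exact ((⊥ : Ideal R).jacobson).neg_mem (Ideal.mul_mem_left _ s (hx))
  obtain ⟨t, ht⟩ := key _ h1s
  have ht' : t * s = 1 := by
    rwa [sub_sub_cancel] at ht
  -- t = 1 - x, so (1 - x) * s = 1 as well
  have htx : t = 1 - x := by
    calc t = t * 1 := (mul_one t).symm
    _ = t * (s * (1 - x)) := by rw [hs]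
    _ = (t * s) * (1 - x) := by rw [mul_assoc]
    _ = 1 - x := by rw [ht', one_mul]
  exact isUnit_iff_exists.2 ⟨s, by rw [← htx]; exact ⟨ht', hs ▸ by rw [htx]⟩⟩

/-- Nakayama's lemma for a two-sided ideal in a possibly noncommutative ring. -/
lemma aux_nakayama {R M : Type*} [Ring R] [AddCommGroup M] [Module R M]
    (I : Ideal R) (hI2 : ∀ x ∈ I, ∀ r : R, x * r ∈ I)
    (hIrad : I ≤ (⊥ : Ideal R).jacobson)
    (N : Submodule R M) (hN : N.FG) (h : N ≤ I • N) : N = ⊥ := by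
  classical
  obtain ⟨s, rfl⟩ := hN
  induction s using Finset.induction_on with
  | empty => simp [Submodule.span_empty] 
  | @insert m t hmt ih =>
    simp only [Finset.coe_insert] at h ⊢
    have hm : m ∈ I • Submodule.span R (insert m (t : Set M)) :=
      h (Submodule.subset_span (Set.mem_insert m _))
    rw [Submodule.span_insert, Submodule.smul_sup] at hm
    obtain ⟨p, hp, q, hq, hpq⟩ := Submodule.mem_sup.1 hm
    have hex : ∃ x ∈ I, x • m = p := by
      refine Submodule.smul_induction_on hp ?_ ?_
      · intro r hr n hn
        obtain ⟨c, rfl⟩ := Submodule.mem_span_singleton.1 hn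
        exact ⟨r * c, hI2 r hr c, mul_smul r c m⟩
      · rintro y z ⟨xy, hxy, hy⟩ ⟨xz, hxz, hz⟩
        exact ⟨xy + xz, I.add_mem hxy hxz, by rw [add_smul, hy, hz]⟩
    obtain ⟨x, hxI, rfl⟩ := hex
    have h1 : (1 - x) • m = q := by
      rw [sub_smul, one_smul]
      exact sub_eq_iff_eq_add'.2 hpq.symm
    obtain ⟨u, hu⟩ := aux_isUnit_one_sub (hIrad hxI)
    have hmem : m ∈ Submodule.span R (t : Set M) := by
      have hq' : q ∈ Submodule.span R (t : Set M) := Submodule.smul_le_right hq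
      have : ((u⁻¹ : Rˣ) : R) • q = m := by
        rw [← h1, ← hu, ← mul_smul, Units.inv_mul, one_smul]
      exact this ▸ Submodule.smul_mem _ _ hq'
    have hNt : Submodule.span R (insert m (t : Set M)) = Submodule.span R (t : Set M) :=
      le_antisymm (Submodule.span_le.2 (Set.insert_subset_iff.2 ⟨hmem, Submodule.subset_span⟩))
        (Submodule.span_mono (Set.subset_insert _ _))
    rw [hNt] at h ⊢
    exact ih h

/-- Let `A ⊆ B` be rings with `B` finitely generated as a left `A`-module, and let
`𝔞 ⊆ rad A` be a two-sided ideal of `A` with `B𝔞 ⊆ 𝔞B`.  Then `𝔞` annihilates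
every simple left `B`-module. -/
theorem ideal_annihilates_simple
    (B : Type*) [Ring B] (A : Subring B) [Module.Finite A B]
    (a : Ideal A)
    (ha_rad : a ≤ (⊥ : Ideal A).jacobson)
    (ha_twosided : ∀ x ∈ a, ∀ r : A, x * r ∈ a)
    (hBa : ∀ (b : B), ∀ x ∈ a, b * (x : B) ∈ idealRightMultiples A a) :
    ∀ (M : Type*) [AddCommGroup M] [Module B M], IsSimpleModule B M →
      ∀ x ∈ a, ∀ m : M, (x : B) • m = 0 := by
  intro M _ _ hsimp x hx m
  classical
  -- the A-submodule 𝔞M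
  set P : Submodule A M := a • (⊤ : Submodule A M) with hP
  -- elements of 𝔞B act into P
  have hact : ∀ z ∈ idealRightMultiples A a, ∀ n : M, z • n ∈ P := by
    intro z hz
    induction hz using AddSubgroup.closure_induction with
    | mem w hw =>
      obtain ⟨y, hy, c, rfl⟩ := hw
      intro n
      have : ((y : B) * c) • n = y • (c • n) := by rw [mul_smul]; rfl
      rw [this]
      exact Submodule.smul_mem_smul hy Submodule.mem_top
    | zero => intro n; rw [zero_smul]; exact P.zero_mem
    | add w w' _ _ hw hw' => intro n; rw [add_smul]; exact P.add_mem (hw n) (hw' n)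
    | neg w _ hw => intro n; rw [neg_smul]; exact P.neg_mem (hw n)
  -- P is a B-submodule
  have hBstable : ∀ (b : B), ∀ p ∈ P, b • p ∈ P := by
    intro b p hp
    refine Submodule.smul_induction_on hp ?_ ?_
    · intro r hr n _
      have h2 := hact _ (hBa b r hr) n
      rw [mul_smul] at h2
      exact h2
    · intro y z hy hz
      rw [smul_add]; exact P.add_mem hy hz
  let N : Submodule B M :=
    { carrier := (P : Set M)
      add_mem' := fun h1 h2 => P.add_mem h1 h2
      zero_mem' := P.zero_mem
      smul_mem' := fun b p hp => hBstable b p hp }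
  have hxmN : (x : B) • m ∈ N := by
    show (x : B) • m ∈ P
    exact Submodule.smul_mem_smul hx Submodule.mem_top
  rcases eq_bot_or_eq_top N with hbot | htop
  · rw [hbot] at hxmN
    simpa using hxmN
  · -- Nakayama: M is f.g. over A since it's cyclic over B and B is f.g. over A
    by_cases hM : Subsingleton M
    · exact Subsingleton.elim _ _
    have : Nontrivial M := not_subsingleton_iff_nontrivial.1 hM
    obtain ⟨m₀, hm₀⟩ := exists_ne (0 : M)
    have hspan : Submodule.span B {m₀} = ⊤ := by
      rcases eq_bot_or_eq_top (Submodule.span B {m₀}) with hb | ht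
      · exact absurd (hb ▸ Submodule.subset_span (Set.mem_singleton m₀)) (by simpa using hm₀)
      · exact ht
    obtain ⟨s, hs⟩ := Module.Finite.fg_top (R := A) (M := B)
    have hfgtop : (⊤ : Submodule A M).FG := by
      refine ⟨s.image (· • m₀), le_antisymm le_top ?_⟩
      intro y _
      have hy : y ∈ Submodule.span B {m₀} := hspan ▸ Submodule.mem_top
      obtain ⟨b, rfl⟩ := Submodule.mem_span_singleton.1 hy
      have hb : b ∈ Submodule.span A (s : Set B) := hs ▸ Submodule.mem_top
      have : ∀ c ∈ Submodule.span A (s : Set B),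
          c • m₀ ∈ Submodule.span A ((s.image (· • m₀) : Finset M) : Set M) := by
        intro c hc
        induction hc using Submodule.span_induction with
        | mem w hw =>
          exact Submodule.subset_span (by simpa using Finset.mem_image_of_mem _ hw)
        | zero => rw [zero_smul]; exact Submodule.zero_mem _
        | add w w' _ _ hw hw' => rw [add_smul]; exact Submodule.add_mem _ hw hw'
        | smul r w _ hw =>
          have : (r • w) • m₀ = r • (w • m₀) := by
            show ((r : B) * w) • m₀ = _
            rw [mul_smul]; rfl
          rw [this]
          exact Submodule.smul_mem _ r hw
      exact this b hb
    have htople : (⊤ : Submodule A M) ≤ a • (⊤ : Submodule A M) := by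
      intro y _
      have : y ∈ N := htop ▸ Submodule.mem_top
      exact this
    have := aux_nakayama a ha_twosided ha_rad ⊤ hfgtop htople
    have : Subsingleton M := by
      constructor
      intro u v
      have hu : u ∈ (⊥ : Submodule A M) := this ▸ Submodule.mem_top
      have hv : v ∈ (⊥ : Submodule A M) := this ▸ Submodule.mem_top
      rw [Submodule.mem_bot] at hu hv
      rw [hu, hv]
    exact absurd this hM
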